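/- Let m_P, m_Q ∈ ℝ with m_P ≠ m_Q and σ_P, σ_Q ≥ 0, and set a := m_P − m_Q. Then the infimum of H²(P,Q) over all pairs of Borel probability measures P, Q on ℝ with means m_P, m_Q and variances σ_P², σ_Q² is exactly 1 − √(1 − a²/(a² + (σ_P + σ_Q)²)), and this infimum is a minimum, attained by a pair of probability measures supported on a common two-point set. -/

import Mathlib

open MeasureTheory Real

set_option maxHeartbeats 1000000
open scoped ENNReal

/-- The squared Hellinger distance `H²(P,Q) = (1/2)∫(√p − √q)² dμ`, computed with
respect to the dominating measure `μ = P + Q`. -/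
noncomputable def hellingerSq (P Q : Measure ℝ) : ℝ :=
  (1 / 2) * ∫ x, (Real.sqrt ((P.rnDeriv (P + Q)) x).toReal
      - Real.sqrt ((Q.rnDeriv (P + Q)) x).toReal) ^ 2 ∂(P + Q)

section Aux
variable (P Q : Measure ℝ) [IsProbabilityMeasure P] [IsProbabilityMeasure Q]

lemma rnd_sum_one : ∀ᵐ x ∂(P+Q), (P.rnDeriv (P+Q) x).toReal + (Q.rnDeriv (P+Q) x).toReal = 1 := by
  have hsum : P.rnDeriv (P+Q) + Q.rnDeriv (P+Q) =ᵐ[P+Q] fun _ => 1 :=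
    (Measure.rnDeriv_add P Q (P+Q)).symm.trans (Measure.rnDeriv_self (P+Q))
  filter_upwards [hsum, Measure.rnDeriv_lt_top P (P+Q), Measure.rnDeriv_lt_top Q (P+Q)]
    with x hx hxP hxQ
  have : P.rnDeriv (P+Q) x + Q.rnDeriv (P+Q) x = 1 := hx
  rw [← ENNReal.toReal_add hxP.ne hxQ.ne, this, ENNReal.toReal_one]

lemma BC_integrable :
    Integrable (fun x => Real.sqrt ((P.rnDeriv (P+Q) x).toReal * (Q.rnDeriv (P+Q) x).toReal))
      (P+Q) := by
  have hmeas : AEStronglyMeasurable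
      (fun x => Real.sqrt ((P.rnDeriv (P+Q) x).toReal * (Q.rnDeriv (P+Q) x).toReal)) (P+Q) :=
    (((Measure.measurable_rnDeriv P (P+Q)).ennreal_toReal.mul
      (Measure.measurable_rnDeriv Q (P+Q)).ennreal_toReal).sqrt).aestronglyMeasurable
  refine (integrable_const (1:ℝ)).mono' hmeas ?_
  filter_upwards [rnd_sum_one P Q] with x hx
  have h0P : (0:ℝ) ≤ (P.rnDeriv (P+Q) x).toReal := ENNReal.toReal_nonneg
  have h0Q : (0:ℝ) ≤ (Q.rnDeriv (P+Q) x).toReal := ENNReal.toReal_nonneg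
  rw [Real.norm_eq_abs, abs_of_nonneg (Real.sqrt_nonneg _)]
  rw [show (1:ℝ) = Real.sqrt 1 by simp]
  apply Real.sqrt_le_sqrt
  nlinarith

lemma hellinger_eq_one_sub_BC :
    hellingerSq P Q
      = 1 - ∫ x, Real.sqrt ((P.rnDeriv (P+Q) x).toReal * (Q.rnDeriv (P+Q) x).toReal) ∂(P+Q) := by
  have hcong : ∀ᵐ x ∂(P+Q),
      (Real.sqrt ((P.rnDeriv (P+Q)) x).toReal - Real.sqrt ((Q.rnDeriv (P+Q)) x).toReal) ^ 2
        = 1 - 2 * Real.sqrt ((P.rnDeriv (P+Q) x).toReal * (Q.rnDeriv (P+Q) x).toReal) := by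
    filter_upwards [rnd_sum_one P Q] with x hx
    have h0P : (0:ℝ) ≤ (P.rnDeriv (P+Q) x).toReal := ENNReal.toReal_nonneg
    have h0Q : (0:ℝ) ≤ (Q.rnDeriv (P+Q) x).toReal := ENNReal.toReal_nonneg
    have e1 : Real.sqrt ((P.rnDeriv (P+Q) x).toReal) ^ 2 = (P.rnDeriv (P+Q) x).toReal :=
      Real.sq_sqrt h0P
    have e2 : Real.sqrt ((Q.rnDeriv (P+Q) x).toReal) ^ 2 = (Q.rnDeriv (P+Q) x).toReal :=
      Real.sq_sqrt h0Q
    have e3 : Real.sqrt ((P.rnDeriv (P+Q) x).toReal) * Real.sqrt ((Q.rnDeriv (P+Q) x).toReal)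
        = Real.sqrt ((P.rnDeriv (P+Q) x).toReal * (Q.rnDeriv (P+Q) x).toReal) :=
      (Real.sqrt_mul h0P _).symm
    nlinarith [e1, e2, e3, hx]
  have hint : ∫ x, (Real.sqrt ((P.rnDeriv (P+Q)) x).toReal
        - Real.sqrt ((Q.rnDeriv (P+Q)) x).toReal) ^ 2 ∂(P+Q)
      = ∫ x, (1 - 2 * Real.sqrt ((P.rnDeriv (P+Q) x).toReal * (Q.rnDeriv (P+Q) x).toReal)) ∂(P+Q) :=
    integral_congr_ae hcong
  have hmu : ((P+Q) Set.univ).toReal = 2 := by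
    simp [Measure.add_apply]
    norm_num
  rw [hellingerSq, hint, integral_sub (integrable_const _) ((BC_integrable P Q).const_mul 2),
    integral_const, integral_const_mul, smul_eq_mul, measureReal_def, hmu]
  ring
end Aux

section B
variable {P Q : Measure ℝ} [IsProbabilityMeasure P] [IsProbabilityMeasure Q]

lemma BC_le_certificate
    (f g : ℝ → ℝ) (hf : ∀ x, 0 ≤ f x) (hg : ∀ x, 0 ≤ g x) (hfg : ∀ x, 1 ≤ f x * g x)
    (hfP : Integrable f P) (hgQ : Integrable g Q) :
    2 * ∫ x, Real.sqrt ((P.rnDeriv (P+Q) x).toReal * (Q.rnDeriv (P+Q) x).toReal) ∂(P+Q)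
      ≤ ∫ x, f x ∂P + ∫ x, g x ∂Q := by
  have hPac : P ≪ (P + Q) := Measure.absolutelyContinuous_of_le (Measure.le_add_right le_rfl)
  have hQac : Q ≪ (P + Q) := Measure.absolutelyContinuous_of_le (Measure.le_add_left le_rfl)
  have hfI : Integrable (fun x => (P.rnDeriv (P+Q) x).toReal • f x) (P+Q) :=
    (integrable_rnDeriv_smul_iff hPac).mpr hfP
  have hgI : Integrable (fun x => (Q.rnDeriv (P+Q) x).toReal • g x) (P+Q) :=
    (integrable_rnDeriv_smul_iff hQac).mpr hgQ
  have h1 : ∫ x, f x ∂P = ∫ x, (P.rnDeriv (P+Q) x).toReal • f x ∂(P+Q) :=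
    (integral_rnDeriv_smul hPac).symm
  have h2 : ∫ x, g x ∂Q = ∫ x, (Q.rnDeriv (P+Q) x).toReal • g x ∂(P+Q) :=
    (integral_rnDeriv_smul hQac).symm
  have hadd : Integrable (fun x => (P.rnDeriv (P+Q) x).toReal • f x
      + (Q.rnDeriv (P+Q) x).toReal • g x) (P+Q) := hfI.add hgI
  rw [h1, h2, ← integral_add hfI hgI, ← integral_const_mul]
  refine integral_mono ((BC_integrable P Q).const_mul 2) hadd fun x => ?_
  simp only [smul_eq_mul]
  set pd := (P.rnDeriv (P+Q) x).toReal with hpd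
  set qd := (Q.rnDeriv (P+Q) x).toReal with hqd
  have h0p : 0 ≤ pd := ENNReal.toReal_nonneg
  have h0q : 0 ≤ qd := ENNReal.toReal_nonneg
  have hfx := hf x
  have hgx := hg x
  have hpf : 0 ≤ pd * f x := mul_nonneg h0p hfx
  have hqg : 0 ≤ qd * g x := mul_nonneg h0q hgx
  have step1 : Real.sqrt (pd * qd) ≤ Real.sqrt ((pd * f x) * (qd * g x)) := by
    apply Real.sqrt_le_sqrt
    have h := hfg x
    nlinarith [mul_nonneg h0p h0q]
  have step2 : Real.sqrt ((pd * f x) * (qd * g x)) ≤ (pd * f x + qd * g x) / 2 := by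
    have h2' : (pd * f x) * (qd * g x) ≤ ((pd * f x + qd * g x) / 2)^2 := by
      nlinarith [sq_nonneg (pd * f x - qd * g x)]
    calc Real.sqrt ((pd * f x) * (qd * g x)) ≤ Real.sqrt (((pd * f x + qd * g x) / 2)^2) :=
          Real.sqrt_le_sqrt h2'
      _ = (pd * f x + qd * g x) / 2 := Real.sqrt_sq (by linarith)
  show 2 * Real.sqrt (pd * qd) ≤ pd * f x + qd * g x
  linarith

lemma second_moment_eq (m : ℝ)
    (hx : Integrable (fun x => x) P) (hx2 : Integrable (fun x => x^2) P)
    (hm : ∫ x, x ∂P = m) :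
    ∫ x, x^2 ∂P = (∫ x, (x - m)^2 ∂P) + m^2 := by
  have hlin : Integrable (fun x : ℝ => -2*m*x + m^2) P :=
    (hx.const_mul (-2*m)).add (integrable_const (m^2))
  have e2 : ∫ x, (x - m)^2 ∂P = ∫ x, (x^2 + (-2*m*x + m^2)) ∂P := by
    congr 1; funext x; ring
  rw [e2, integral_add hx2 hlin, integral_add (hx.const_mul (-2*m)) (integrable_const (m^2)),
    integral_const_mul, hm, integral_const]
  simp [measure_univ]
  ring

lemma quadform_integrable (α β K S : ℝ)
    (hx : Integrable (fun x => x) P) (hx2 : Integrable (fun x => x^2) P) :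
    Integrable (fun x => ((α*x+β)^2 + K)/S) P := by
  have e : (fun x : ℝ => ((α*x+β)^2 + K)/S)
      = fun x => (α^2/S)*x^2 + ((2*α*β/S)*x + ((β^2+K)/S)) := by
    funext x; field_simp; ring
  rw [e]
  exact (hx2.const_mul _).add ((hx.const_mul _).add (integrable_const _))

lemma integral_quadform_le (m σ2 : ℝ)
    (hx : Integrable (fun x => x) P) (hx2 : Integrable (fun x => x^2) P)
    (hm : ∫ x, x ∂P = m) (hv : ∫ x, (x - m)^2 ∂P ≤ σ2)
    (α β K S : ℝ) (hS : 0 < S) :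
    ∫ x, ((α*x+β)^2 + K)/S ∂P ≤ ((α*m+β)^2 + α^2*σ2 + K)/S := by
  have hlin : Integrable (fun x : ℝ => (2*α*β/S)*x + ((β^2+K)/S)) P :=
    (hx.const_mul _).add (integrable_const _)
  have e : ∫ x, ((α*x+β)^2 + K)/S ∂P
      = ∫ x, ((α^2/S)*x^2 + ((2*α*β/S)*x + ((β^2+K)/S))) ∂P := by
    congr 1; funext x; field_simp; ring
  rw [e, integral_add (hx2.const_mul _) hlin,
    integral_add (hx.const_mul _) (integrable_const _), integral_const_mul, integral_const_mul,
    integral_const, hm, second_moment_eq m hx hx2 hm]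
  simp only [probReal_univ, smul_eq_mul, one_mul]
  have hα : (0:ℝ) ≤ α^2/S := by positivity
  have hstep : α^2/S * ((∫ x, (x - m)^2 ∂P) + m^2) ≤ α^2/S * (σ2 + m^2) :=
    mul_le_mul_of_nonneg_left (by linarith) hα
  calc α^2/S * ((∫ x, (x - m)^2 ∂P) + m^2) + (2*α*β/S*m + (β^2+K)/S)
      ≤ α^2/S * (σ2 + m^2) + (2*α*β/S*m + (β^2+K)/S) := by linarith
    _ = ((α*m+β)^2 + α^2*σ2 + K)/S := by field_simp; ring

end B

section C
variable {P Q : Measure ℝ} [IsProbabilityMeasure P] [IsProbabilityMeasure Q]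

lemma BC_le_rho (p q u₁ u₂ : ℝ) (hp0 : 0 < p) (hp1 : p < 1) (hq0 : 0 < q) (hq1 : q < 1)
    (hd : u₁ ≠ u₂)
    (hxP : Integrable (fun x => x) P) (hx2P : Integrable (fun x => x^2) P)
    (hxQ : Integrable (fun x => x) Q) (hx2Q : Integrable (fun x => x^2) Q)
    (hmP : ∫ x, x ∂P = p*u₁ + (1-p)*u₂)
    (hvP : ∫ x, (x - (p*u₁+(1-p)*u₂))^2 ∂P ≤ p*(1-p)*(u₁-u₂)^2)
    (hmQ : ∫ x, x ∂Q = q*u₁ + (1-q)*u₂)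
    (hvQ : ∫ x, (x - (q*u₁+(1-q)*u₂))^2 ∂Q ≤ q*(1-q)*(u₁-u₂)^2) :
    ∫ x, Real.sqrt ((P.rnDeriv (P+Q) x).toReal * (Q.rnDeriv (P+Q) x).toReal) ∂(P+Q)
      ≤ Real.sqrt (p*q) + Real.sqrt ((1-p)*(1-q)) := by
  set d : ℝ := u₁ - u₂ with hd'
  have hdne : d ≠ 0 := sub_ne_zero.mpr hd
  set F₁ : ℝ := Real.sqrt (q/p) with hF₁
  set F₂ : ℝ := Real.sqrt ((1-q)/(1-p)) with hF₂
  have hp1ne : (1:ℝ) - p ≠ 0 := by linarith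
  have hF₁pos : 0 < F₁ := Real.sqrt_pos.mpr (div_pos hq0 hp0)
  have hF₂pos : 0 < F₂ := Real.sqrt_pos.mpr (div_pos (by linarith) (by linarith))
  set Δ : ℝ := F₁ - F₂ with hΔ
  set Sg : ℝ := F₁ + F₂ with hSg
  have hSgpos : 0 < Sg := by rw [hSg]; linarith
  have hKpos : 0 < F₁ * F₂ := mul_pos hF₁pos hF₂pos
  -- square identities
  have hF₁sq : F₁^2 = q/p := Real.sq_sqrt (div_pos hq0 hp0).le
  have hF₂sq : F₂^2 = (1-q)/(1-p) := Real.sq_sqrt (div_pos (by linarith) (by linarith)).le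
  -- the two quadratics
  set α : ℝ := Δ / d with hα
  set βf : ℝ := F₂ - Δ*u₂/d with hβf
  set βg : ℝ := F₁ + Δ*u₂/d with hβg
  set f : ℝ → ℝ := fun x => ((α*x+βf)^2 + F₁*F₂)/Sg with hf'
  set g : ℝ → ℝ := fun x => (((-α)*x+βg)^2 + F₁*F₂)/(F₁*F₂*Sg) with hg'
  have hfnn : ∀ x, 0 ≤ f x := fun x => by
    simp only [hf']
    exact div_nonneg (by nlinarith [sq_nonneg (α*x+βf)]) hSgpos.le
  have hgnn : ∀ x, 0 ≤ g x := fun x => by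
    simp only [hg']
    exact div_nonneg (by nlinarith [sq_nonneg ((-α)*x+βg)]) (mul_pos hKpos hSgpos).le
  have hfg : ∀ x, 1 ≤ f x * g x := by
    intro x
    have key : f x * g x = 1 +
        ((α*x+βf)*((-α)*x+βg) - F₁*F₂)^2/(F₁*F₂*Sg^2) := by
      simp only [hf', hg']
      have hAB : (α*x+βf) + ((-α)*x+βg) = Sg := by
        simp only [hα, hβf, hβg, hSg]; field_simp; ring
      have hne1 : F₁*F₂ ≠ 0 := ne_of_gt hKpos
      have hne2 : Sg ≠ 0 := ne_of_gt hSgpos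
      set A := α*x+βf
      set B := (-α)*x+βg
      have hB : B = Sg - A := by linarith
      rw [hB]
      field_simp
      ring
    rw [key]
    have : 0 ≤ ((α*x+βf)*((-α)*x+βg) - F₁*F₂)^2/(F₁*F₂*Sg^2) :=
      div_nonneg (sq_nonneg _) (mul_pos hKpos (pow_pos hSgpos 2)).le
    linarith
  -- integrability
  have hfP : Integrable f P := quadform_integrable α βf (F₁*F₂) Sg hxP hx2P
  have hgQ : Integrable g Q := quadform_integrable (-α) βg (F₁*F₂) (F₁*F₂*Sg) hxQ hx2Q
  -- integral bounds
  have hIf : ∫ x, f x ∂P ≤ ((α*(p*u₁+(1-p)*u₂)+βf)^2 + α^2*(p*(1-p)*d^2) + F₁*F₂)/Sg :=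
    integral_quadform_le _ _ hxP hx2P hmP hvP α βf (F₁*F₂) Sg hSgpos
  have hIg : ∫ x, g x ∂Q ≤ (((-α)*(q*u₁+(1-q)*u₂)+βg)^2 + (-α)^2*(q*(1-q)*d^2) + F₁*F₂)/(F₁*F₂*Sg) :=
    integral_quadform_le _ _ hxQ hx2Q hmQ hvQ (-α) βg (F₁*F₂) (F₁*F₂*Sg) (mul_pos hKpos hSgpos)
  -- simplify the bounds
  have hfval : ((α*(p*u₁+(1-p)*u₂)+βf)^2 + α^2*(p*(1-p)*d^2) + F₁*F₂)/Sg
      = p*F₁ + (1-p)*F₂ := by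
    have h1 : α*(p*u₁+(1-p)*u₂)+βf = Δ*p + F₂ := by
      simp only [hα, hβf]; field_simp; ring
    have h2 : α^2*(p*(1-p)*d^2) = Δ^2*(p*(1-p)) := by
      simp only [hα]; field_simp
    rw [h1, h2, hΔ, hSg]
    field_simp
    ring
  have hgval : (((-α)*(q*u₁+(1-q)*u₂)+βg)^2 + (-α)^2*(q*(1-q)*d^2) + F₁*F₂)/(F₁*F₂*Sg)
      = (q*F₂ + (1-q)*F₁)/(F₁*F₂) := by
    have h1 : (-α)*(q*u₁+(1-q)*u₂)+βg = F₁ - Δ*q := by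
      simp only [hα, hβg]; field_simp; ring
    have h2 : (-α)^2*(q*(1-q)*d^2) = Δ^2*(q*(1-q)) := by
      simp only [hα]; field_simp
    rw [h1, h2, hΔ, hSg]
    rw [div_eq_div_iff (mul_pos hKpos hSgpos).ne' hKpos.ne']
    ring
  -- the sqrt computations
  have hs1 : p * F₁ = Real.sqrt (p*q) := by
    rw [hF₁, show p*q = p^2 * (q/p) by field_simp [hp0.ne'], Real.sqrt_mul (by positivity),
      Real.sqrt_sq hp0.le]
  have hs2 : (1-p) * F₂ = Real.sqrt ((1-p)*(1-q)) := by
    rw [hF₂, show (1-p)*(1-q) = (1-p)^2 * ((1-q)/(1-p)) by field_simp [hp1ne],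
      Real.sqrt_mul (by positivity), Real.sqrt_sq (by linarith)]
  have hs3 : q / F₁ = Real.sqrt (p*q) := by
    have h : Real.sqrt (p*q) * F₁ = q := by
      rw [hF₁, ← Real.sqrt_mul (mul_nonneg hp0.le hq0.le),
        show p*q*(q/p) = q^2 by field_simp [hp0.ne'],
        Real.sqrt_sq hq0.le]
    rw [div_eq_iff hF₁pos.ne']
    exact h.symm
  have hs4 : (1-q) / F₂ = Real.sqrt ((1-p)*(1-q)) := by
    have h : Real.sqrt ((1-p)*(1-q)) * F₂ = 1-q := by
      rw [hF₂, ← Real.sqrt_mul (mul_nonneg (by linarith) (by linarith)),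
        show (1-p)*(1-q)*((1-q)/(1-p)) = (1-q)^2 by
          field_simp [hp1ne],
        Real.sqrt_sq (by linarith)]
    rw [div_eq_iff hF₂pos.ne']
    exact h.symm
  have hsplit : (q*F₂ + (1-q)*F₁)/(F₁*F₂) = q/F₁ + (1-q)/F₂ := by
    field_simp [hF₁pos.ne', hF₂pos.ne']
  have hcert := BC_le_certificate f g hfnn hgnn hfg hfP hgQ
  rw [hfval] at hIf
  rw [hgval, hsplit, hs3, hs4] at hIg
  rw [hs1, hs2] at hIf
  linarith

section D

lemma le_of_sq_le_sq' {x y : ℝ} (h : x^2 ≤ y^2) (hy : 0 ≤ y) : x ≤ y := by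
  have h2 : |x| ≤ y := by
    have h3 := Real.sqrt_le_sqrt h
    rwa [Real.sqrt_sq_eq_abs, Real.sqrt_sq hy] at h3
  exact (le_abs_self x).trans h2

lemma lt_of_sq_lt_sq' {x y : ℝ} (h : x^2 < y^2) (hy : 0 ≤ y) : x < y := by
  have h2 : |x| < y := by
    have h3 := Real.sqrt_lt_sqrt (sq_nonneg x) h
    rwa [Real.sqrt_sq_eq_abs, Real.sqrt_sq hy] at h3
  exact (le_abs_self x).trans_lt h2

lemma constr (mP mQ σP σQ : ℝ) (hne : mP ≠ mQ) (hσP : 0 ≤ σP) (hσQ : 0 ≤ σQ) :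
    ∃ p q u₁ u₂ : ℝ, 0 < p ∧ p ≤ 1 ∧ 0 ≤ q ∧ q < 1 ∧ u₁ ≠ u₂ ∧
      (0 < σP → p < 1) ∧ (0 < σQ → 0 < q) ∧
      p*u₁ + (1-p)*u₂ = mP ∧ q*u₁ + (1-q)*u₂ = mQ ∧
      p*(1-p)*(u₁-u₂)^2 = σP^2 ∧ q*(1-q)*(u₁-u₂)^2 = σQ^2 ∧
      Real.sqrt (p*q) + Real.sqrt ((1-p)*(1-q))
        = (σP+σQ) / Real.sqrt ((mP-mQ)^2 + (σP+σQ)^2) := by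
  set a : ℝ := mP - mQ with ha'
  have ha : a ≠ 0 := sub_ne_zero.mpr hne
  have ha2 : 0 < a^2 := by positivity
  set b : ℝ := σP - σQ with hb'
  set s : ℝ := σP + σQ with hs'
  set e : ℝ := Real.sqrt (a^2 + b^2) with he'
  set r : ℝ := Real.sqrt (a^2 + s^2) with hr'
  have he2 : e^2 = a^2 + b^2 := Real.sq_sqrt (by positivity)
  have hr2 : r^2 = a^2 + s^2 := Real.sq_sqrt (by positivity)
  have hepos : 0 < e := Real.sqrt_pos.mpr (by positivity)
  have hrpos : 0 < r := Real.sqrt_pos.mpr (by positivity)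
  set E : ℝ := e * r with hE'
  have hEpos : 0 < E := mul_pos hepos hrpos
  have hE2 : E^2 = (a^2 + b^2) * (a^2 + s^2) := by rw [hE', mul_pow, he2, hr2]
  have hsmb : s - b = 2*σQ := by rw [hs', hb']; ring
  have hspb : s + b = 2*σP := by rw [hs', hb']; ring
  have hsb4 : s^2 - b^2 = 4*(σP*σQ) := by rw [hs', hb']; ring
  have hsb : 0 ≤ s^2 - b^2 := by rw [hsb4]; positivity
  have hs0 : 0 ≤ s := by rw [hs']; linarith
  have hidP : E^2 - (b*s - a^2)^2 = 4*a^2*σP^2 := by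
    rw [hE2, hb', hs']; ring
  have hidQ : E^2 - (b*s + a^2)^2 = 4*a^2*σQ^2 := by
    rw [hE2, hb', hs']; ring
  have hidE : E^2 - (b*s)^2 = a^2*(a^2+b^2+s^2) := by rw [hE2]; ring
  -- key inequalities
  have hEbs : b*s < E := by
    refine lt_of_sq_lt_sq' ?_ hEpos.le
    linarith only [hidE, mul_pos ha2 ha2, sq_nonneg (a*b), sq_nonneg (a*s)]
  have hq0 : 0 ≤ E - b*s - a^2 := by
    have := le_of_sq_le_sq' (x := b*s + a^2) (y := E)
      (by linarith only [hidQ, sq_nonneg (a*σQ)]) hEpos.le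
    linarith only [this]
  have hp1 : 0 ≤ E + b*s - a^2 := by
    have := le_of_sq_le_sq' (x := a^2 - b*s) (y := E)
      (by linarith only [hidP, sq_nonneg (a*σP)]) hEpos.le
    linarith only [this]
  have hp1' : 0 < σP → 0 < E + b*s - a^2 := by
    intro h
    have := lt_of_sq_lt_sq' (x := a^2 - b*s) (y := E)
      (by nlinarith only [hidP, mul_pos ha2 (mul_pos h h)]) hEpos.le
    linarith only [this]
  have hq0' : 0 < σQ → 0 < E - b*s - a^2 := by
    intro h
    have := lt_of_sq_lt_sq' (x := b*s + a^2) (y := E)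
      (by nlinarith only [hidQ, mul_pos ha2 (mul_pos h h)]) hEpos.le
    linarith only [this]
  set p : ℝ := (E - b*s + a^2)/(2*E) with hp'
  set q : ℝ := (E - b*s - a^2)/(2*E) with hq'
  set d : ℝ := r*e/a with hd'
  have hdne : d ≠ 0 := by
    rw [hd']
    exact div_ne_zero (mul_pos hrpos hepos).ne' ha
  set u₂ : ℝ := mP - p*d with hu₂'
  set u₁ : ℝ := u₂ + d with hu₁'
  have hu12 : u₁ - u₂ = d := by rw [hu₁']; ring
  have hd2 : d^2 = E^2/a^2 := by rw [hd', hE']; field_simp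
  refine ⟨p, q, u₁, u₂, ?_, ?_, ?_, ?_, ?_, ?_, ?_, ?_, ?_, ?_, ?_, ?_⟩
  · -- 0 < p
    rw [hp']
    apply div_pos _ (by linarith)
    nlinarith
  · -- p ≤ 1
    rw [hp', div_le_one (by linarith)]
    linarith
  · -- 0 ≤ q
    rw [hq']
    exact div_nonneg hq0 (by linarith)
  · -- q < 1
    rw [hq', div_lt_one (by linarith)]
    nlinarith
  · -- u₁ ≠ u₂
    rw [hu₁']
    intro h
    exact hdne (by linarith)
  · -- σP > 0 → p < 1
    intro h
    rw [hp', div_lt_one (by linarith)]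
    have := hp1' h
    linarith
  · -- σQ > 0 → 0 < q
    intro h
    rw [hq']
    exact div_pos (hq0' h) (by linarith)
  · -- mean P
    rw [hu₁', hu₂']; ring
  · -- mean Q
    rw [hu₁', hu₂', hp', hq', hd', hE']
    have : mQ = mP - a := by rw [ha']; ring
    rw [this]
    field_simp
    ring
  · -- var P
    rw [hu12]
    have key : (E - b*s + a^2) * (E + b*s - a^2) = 4*a^2*σP^2 := by
      have expand : (E - b*s + a^2) * (E + b*s - a^2) = E^2 - (b*s - a^2)^2 := by ring
      rw [expand, hE2, hb', hs']
      ring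
    have h1p : 1 - p = (E + b*s - a^2)/(2*E) := by rw [hp']; field_simp; ring
    rw [hp', h1p, hd2, div_mul_div_comm, div_mul_div_comm,
      div_eq_iff (by
        refine mul_ne_zero (mul_ne_zero ?_ ?_) (pow_ne_zero 2 ha) <;>
          exact (by linarith : (0:ℝ) < 2*E).ne')]
    linear_combination E^2 * key
  · -- var Q
    rw [hu12]
    have key : (E - b*s - a^2) * (E + b*s + a^2) = 4*a^2*σQ^2 := by
      have expand : (E - b*s - a^2) * (E + b*s + a^2) = E^2 - (b*s + a^2)^2 := by ring
      rw [expand, hE2, hb', hs']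
      ring
    have h1q : 1 - q = (E + b*s + a^2)/(2*E) := by rw [hq']; field_simp; ring
    rw [hq', h1q, hd2, div_mul_div_comm, div_mul_div_comm,
      div_eq_iff (by
        refine mul_ne_zero (mul_ne_zero ?_ ?_) (pow_ne_zero 2 ha) <;>
          exact (by linarith : (0:ℝ) < 2*E).ne')]
    linear_combination E^2 * key
  · -- the rho value
    have hseid : (s*e)^2 - (b*r)^2 = a^2*(s^2-b^2) := by
      linear_combination s^2 * he2 - b^2 * hr2
    have hse : 0 ≤ s*e := mul_nonneg hs0 hepos.le
    have h5 : (b*r)^2 ≤ (s*e)^2 := by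
      have h4 : 0 ≤ a^2*(s^2-b^2) := mul_nonneg ha2.le hsb
      linarith [hseid]
    have habs : |b*r| ≤ s*e := by
      calc |b*r| = Real.sqrt ((b*r)^2) := (Real.sqrt_sq_eq_abs _).symm
        _ ≤ Real.sqrt ((s*e)^2) := Real.sqrt_le_sqrt h5
        _ = s*e := Real.sqrt_sq hse
    have hsebr1 : 0 ≤ s*e - b*r := by linarith [le_abs_self (b*r)]
    have hsebr2 : 0 ≤ s*e + b*r := by linarith [neg_abs_le (b*r)]
    have hpq : p * q = ((s*e - b*r)/(2*E))^2 := by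
      rw [hp', hq']
      have key : (E - b*s + a^2) * (E - b*s - a^2) = (s*e - b*r)^2 := by
        linear_combination hE2 - 2*b*s*hE' - s^2*he2 - b^2*hr2
      rw [div_mul_div_comm, key]
      ring
    have h1p : 1 - p = (E + b*s - a^2)/(2*E) := by rw [hp']; field_simp; ring
    have h1q : 1 - q = (E + b*s + a^2)/(2*E) := by rw [hq']; field_simp; ring
    have hpq2 : (1-p) * (1-q) = ((s*e + b*r)/(2*E))^2 := by
      rw [h1p, h1q]
      have key : (E + b*s - a^2) * (E + b*s + a^2) = (s*e + b*r)^2 := by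
        linear_combination hE2 + 2*b*s*hE' - s^2*he2 - b^2*hr2
      rw [div_mul_div_comm, key]
      ring
    rw [hpq, hpq2, Real.sqrt_sq (div_nonneg hsebr1 (by linarith)),
      Real.sqrt_sq (div_nonneg hsebr2 (by linarith)), ← add_div,
      show s*e - b*r + (s*e + b*r) = 2*(s*e) by ring, hE',
      div_eq_div_iff (mul_pos two_pos (mul_pos hepos hrpos)).ne' hrpos.ne']
    ring
end D

section E

lemma integrable_dirac'' {h : ℝ → ℝ} (hm : StronglyMeasurable h) (a : ℝ) :
    Integrable h (Measure.dirac a) := by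
  refine ⟨hm.aestronglyMeasurable, ?_⟩
  rw [HasFiniteIntegral, lintegral_dirac' a]
  · exact enorm_lt_top
  · exact hm.measurable.enorm

lemma integrable_two_point (c₁ c₂ : ℝ) (u₁ u₂ : ℝ) {h : ℝ → ℝ} (hm : StronglyMeasurable h) :
    Integrable h ((ENNReal.ofReal c₁) • Measure.dirac u₁
      + (ENNReal.ofReal c₂) • Measure.dirac u₂) := by
  refine Integrable.add_measure ?_ ?_ <;>
    exact (integrable_dirac'' hm _).smul_measure ENNReal.ofReal_ne_top

lemma integral_two_point (c₁ c₂ : ℝ) (hc₁ : 0 ≤ c₁) (hc₂ : 0 ≤ c₂) (u₁ u₂ : ℝ)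
    {h : ℝ → ℝ} (hm : StronglyMeasurable h) :
    ∫ x, h x ∂((ENNReal.ofReal c₁) • Measure.dirac u₁ + (ENNReal.ofReal c₂) • Measure.dirac u₂)
      = c₁ * h u₁ + c₂ * h u₂ := by
  rw [integral_add_measure ((integrable_dirac'' hm _).smul_measure ENNReal.ofReal_ne_top)
    ((integrable_dirac'' hm _).smul_measure ENNReal.ofReal_ne_top),
    integral_smul_measure, integral_smul_measure, integral_dirac' _ _ hm, integral_dirac' _ _ hm,
    ENNReal.toReal_ofReal hc₁, ENNReal.toReal_ofReal hc₂, smul_eq_mul, smul_eq_mul]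

lemma withDensity_dirac (ρ : ℝ → ℝ≥0∞) (a : ℝ) :
    (Measure.dirac a).withDensity ρ = ρ a • Measure.dirac a := by
  classical
  ext s hs
  rw [withDensity_apply _ hs, setLIntegral_dirac ρ s, Measure.smul_apply,
    Measure.dirac_apply' _ hs]
  by_cases h : a ∈ s <;> simp [h]

lemma attain_all (p q u₁ u₂ : ℝ) (hp0 : 0 < p) (hp1 : p ≤ 1) (hq0 : 0 ≤ q) (hq1 : q < 1)
    (hu : u₁ ≠ u₂) :
    ∃ P Q : Measure ℝ, IsProbabilityMeasure P ∧ IsProbabilityMeasure Q ∧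
      (∀ h : ℝ → ℝ, StronglyMeasurable h → Integrable h P) ∧
      (∀ h : ℝ → ℝ, StronglyMeasurable h → Integrable h Q) ∧
      (∀ h : ℝ → ℝ, StronglyMeasurable h → ∫ x, h x ∂P = p * h u₁ + (1-p) * h u₂) ∧
      (∀ h : ℝ → ℝ, StronglyMeasurable h → ∫ x, h x ∂Q = q * h u₁ + (1-q) * h u₂) ∧
      P (({u₁, u₂} : Set ℝ)ᶜ) = 0 ∧ Q (({u₁, u₂} : Set ℝ)ᶜ) = 0 ∧
      hellingerSq P Q = 1 - (Real.sqrt (p*q) + Real.sqrt ((1-p)*(1-q))) := by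
  set P : Measure ℝ := (ENNReal.ofReal p) • Measure.dirac u₁
      + (ENNReal.ofReal (1-p)) • Measure.dirac u₂ with hP'
  set Q : Measure ℝ := (ENNReal.ofReal q) • Measure.dirac u₁
      + (ENNReal.ofReal (1-q)) • Measure.dirac u₂ with hQ'
  have hpq0 : 0 < p + q := by linarith
  have hpq2 : 0 < 2 - p - q := by linarith
  haveI hPprob : IsProbabilityMeasure P := by
    constructor
    rw [hP', Measure.add_apply, Measure.smul_apply, Measure.smul_apply]
    simp only [Measure.dirac_apply_of_mem (Set.mem_univ _), smul_eq_mul, mul_one]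
    rw [← ENNReal.ofReal_add hp0.le (by linarith)]
    norm_num
  haveI hQprob : IsProbabilityMeasure Q := by
    constructor
    rw [hQ', Measure.add_apply, Measure.smul_apply, Measure.smul_apply]
    simp only [Measure.dirac_apply_of_mem (Set.mem_univ _), smul_eq_mul, mul_one]
    rw [← ENNReal.ofReal_add hq0 (by linarith)]
    norm_num
  have hintP : ∀ h : ℝ → ℝ, StronglyMeasurable h → Integrable h P :=
    fun h hm => integrable_two_point _ _ _ _ hm
  have hintQ : ∀ h : ℝ → ℝ, StronglyMeasurable h → Integrable h Q :=
    fun h hm => integrable_two_point _ _ _ _ hm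
  have hmomP : ∀ h : ℝ → ℝ, StronglyMeasurable h → ∫ x, h x ∂P = p * h u₁ + (1-p) * h u₂ :=
    fun h hm => integral_two_point _ _ hp0.le (by linarith) _ _ hm
  have hmomQ : ∀ h : ℝ → ℝ, StronglyMeasurable h → ∫ x, h x ∂Q = q * h u₁ + (1-q) * h u₂ :=
    fun h hm => integral_two_point _ _ hq0 (by linarith) _ _ hm
  have hcompl : u₁ ∉ ({u₁, u₂} : Set ℝ)ᶜ := by simp
  have hcompl2 : u₂ ∉ ({u₁, u₂} : Set ℝ)ᶜ := by simp
  have hsupp : ∀ c₁ c₂ : ℝ≥0∞,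
      (c₁ • Measure.dirac u₁ + c₂ • Measure.dirac u₂) (({u₁, u₂} : Set ℝ)ᶜ) = 0 := by
    intro c₁ c₂
    rw [Measure.add_apply, Measure.smul_apply, Measure.smul_apply,
      Measure.dirac_apply, Measure.dirac_apply]
    simp [Set.indicator_of_notMem hcompl, Set.indicator_of_notMem hcompl2]
  -- densities
  set μ : Measure ℝ := P + Q with hμ'
  set ρ₁ : ℝ → ℝ≥0∞ := fun x =>
    if x = u₁ then ENNReal.ofReal (p/(p+q)) else ENNReal.ofReal ((1-p)/(2-p-q)) with hρ₁'
  set ρ₂ : ℝ → ℝ≥0∞ := fun x =>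
    if x = u₁ then ENNReal.ofReal (q/(p+q)) else ENNReal.ofReal ((1-q)/(2-p-q)) with hρ₂'
  have hmeas₁ : Measurable ρ₁ := by
    apply Measurable.ite _ measurable_const measurable_const
    exact MeasurableSet.of_compl (by
      simpa using (measurableSet_singleton u₁).compl)
  have hmeas₂ : Measurable ρ₂ := by
    apply Measurable.ite _ measurable_const measurable_const
    exact MeasurableSet.of_compl (by
      simpa using (measurableSet_singleton u₁).compl)
  have hμeq : μ = (ENNReal.ofReal (p+q)) • Measure.dirac u₁
      + (ENNReal.ofReal (2-p-q)) • Measure.dirac u₂ := by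
    rw [hμ', hP', hQ', ENNReal.ofReal_add hp0.le hq0,
      show (2:ℝ) - p - q = (1-p) + (1-q) by ring,
      ENNReal.ofReal_add (by linarith) (by linarith), add_smul, add_smul]
    abel
  have hρ₁u₁ : ρ₁ u₁ = ENNReal.ofReal (p/(p+q)) := if_pos rfl
  have hρ₁u₂ : ρ₁ u₂ = ENNReal.ofReal ((1-p)/(2-p-q)) := if_neg hu.symm
  have hρ₂u₁ : ρ₂ u₁ = ENNReal.ofReal (q/(p+q)) := if_pos rfl
  have hρ₂u₂ : ρ₂ u₂ = ENNReal.ofReal ((1-q)/(2-p-q)) := if_neg hu.symm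
  have hwd₁ : μ.withDensity ρ₁ = P := by
    rw [hμeq, withDensity_add_measure, withDensity_smul_measure, withDensity_smul_measure,
      withDensity_dirac, withDensity_dirac, hρ₁u₁, hρ₁u₂, smul_smul, smul_smul,
      ← ENNReal.ofReal_mul (by linarith), ← ENNReal.ofReal_mul (by linarith),
      show (p+q) * (p/(p+q)) = p by field_simp,
      show (2-p-q) * ((1-p)/(2-p-q)) = 1-p by field_simp]
  have hwd₂ : μ.withDensity ρ₂ = Q := by
    rw [hμeq, withDensity_add_measure, withDensity_smul_measure, withDensity_smul_measure,
      withDensity_dirac, withDensity_dirac, hρ₂u₁, hρ₂u₂, smul_smul, smul_smul,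
      ← ENNReal.ofReal_mul (by linarith), ← ENNReal.ofReal_mul (by linarith),
      show (p+q) * (q/(p+q)) = q by field_simp,
      show (2-p-q) * ((1-q)/(2-p-q)) = 1-q by field_simp]
  have hrn₁ : P.rnDeriv μ =ᵐ[μ] ρ₁ := by
    rw [← hwd₁]
    exact Measure.rnDeriv_withDensity μ hmeas₁
  have hrn₂ : Q.rnDeriv μ =ᵐ[μ] ρ₂ := by
    rw [← hwd₂]
    exact Measure.rnDeriv_withDensity μ hmeas₂
  -- compute BC
  have hBCcong : ∫ x, Real.sqrt ((P.rnDeriv (P+Q) x).toReal * (Q.rnDeriv (P+Q) x).toReal) ∂(P+Q)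
      = ∫ x, Real.sqrt ((ρ₁ x).toReal * (ρ₂ x).toReal) ∂μ := by
    refine integral_congr_ae ?_
    filter_upwards [hrn₁, hrn₂] with x h₁ h₂
    rw [← hμ', h₁, h₂]
  have hsm : StronglyMeasurable (fun x => Real.sqrt ((ρ₁ x).toReal * (ρ₂ x).toReal)) :=
    ((hmeas₁.ennreal_toReal.mul hmeas₂.ennreal_toReal).sqrt).stronglyMeasurable
  have hBCval : ∫ x, Real.sqrt ((ρ₁ x).toReal * (ρ₂ x).toReal) ∂μ
      = Real.sqrt (p*q) + Real.sqrt ((1-p)*(1-q)) := by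
    rw [hμeq, integral_two_point _ _ (by linarith) (by linarith) _ _ hsm]
    simp only [hρ₁u₁, hρ₁u₂, hρ₂u₁, hρ₂u₂]
    rw [ENNReal.toReal_ofReal (div_nonneg (by linarith) (by linarith)),
      ENNReal.toReal_ofReal (div_nonneg (by linarith) (by linarith)),
      ENNReal.toReal_ofReal (div_nonneg (by linarith) (by linarith)),
      ENNReal.toReal_ofReal (div_nonneg (by linarith) (by linarith))]
    have e1 : (p+q) * Real.sqrt (p/(p+q) * (q/(p+q))) = Real.sqrt (p*q) := by
      nth_rewrite 1 [show (p+q) = Real.sqrt ((p+q)^2) from (Real.sqrt_sq hpq0.le).symm]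
      rw [← Real.sqrt_mul (sq_nonneg (p+q))]
      congr 1
      field_simp [hpq0.ne']
    have e2 : (2-p-q) * Real.sqrt ((1-p)/(2-p-q) * ((1-q)/(2-p-q)))
        = Real.sqrt ((1-p)*(1-q)) := by
      nth_rewrite 1 [show (2-p-q) = Real.sqrt ((2-p-q)^2) from (Real.sqrt_sq hpq2.le).symm]
      rw [← Real.sqrt_mul (sq_nonneg (2-p-q))]
      congr 1
      field_simp [hpq2.ne']
    rw [e1, e2]
  refine ⟨P, Q, hPprob, hQprob, hintP, hintQ, hmomP, hmomQ, hsupp _ _, hsupp _ _, ?_⟩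
  rw [hellinger_eq_one_sub_BC P Q, hBCcong, hBCval]
end E

/-- The pair `(P, Q)` consists of Borel probability measures on ℝ with means
`mP, mQ` and variances `σP², σQ²`. -/
def MomentConstraints (mP mQ σP σQ : ℝ) (P Q : Measure ℝ) : Prop :=
  IsProbabilityMeasure P ∧ IsProbabilityMeasure Q ∧
  Integrable (fun x => x) P ∧ Integrable (fun x => x ^ 2) P ∧
  Integrable (fun x => x) Q ∧ Integrable (fun x => x ^ 2) Q ∧
  (∫ x, x ∂P = mP) ∧ (∫ x, (x - mP) ^ 2 ∂P = σP ^ 2) ∧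
  (∫ x, x ∂Q = mQ) ∧ (∫ x, (x - mQ) ^ 2 ∂Q = σQ ^ 2)

theorem hellinger_inf_attained
    (mP mQ σP σQ : ℝ) (hne : mP ≠ mQ) (hσP : 0 ≤ σP) (hσQ : 0 ≤ σQ)
    (a : ℝ) (ha : a = mP - mQ) :
    sInf { h : ℝ | ∃ P Q : Measure ℝ, MomentConstraints mP mQ σP σQ P Q ∧
        h = hellingerSq P Q } =
      1 - Real.sqrt (1 - a ^ 2 / (a ^ 2 + (σP + σQ) ^ 2)) ∧
    ∃ P Q : Measure ℝ, MomentConstraints mP mQ σP σQ P Q ∧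
      (∃ u₁ u₂ : ℝ, P (({u₁, u₂} : Set ℝ)ᶜ) = 0 ∧ Q (({u₁, u₂} : Set ℝ)ᶜ) = 0) ∧
      hellingerSq P Q = 1 - Real.sqrt (1 - a ^ 2 / (a ^ 2 + (σP + σQ) ^ 2)) := by
  subst ha
  have hane : mP - mQ ≠ 0 := sub_ne_zero.mpr hne
  set r : ℝ := Real.sqrt ((mP - mQ)^2 + (σP + σQ)^2) with hr'
  have hrpos : 0 < r := Real.sqrt_pos.mpr (by positivity)
  have hr2 : r^2 = (mP - mQ)^2 + (σP + σQ)^2 := Real.sq_sqrt (by positivity)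
  have hs0 : 0 ≤ σP + σQ := by linarith
  have hval : Real.sqrt (1 - (mP - mQ) ^ 2 / ((mP - mQ) ^ 2 + (σP + σQ) ^ 2))
      = (σP + σQ) / r := by
    have h1 : 1 - (mP - mQ) ^ 2 / ((mP - mQ) ^ 2 + (σP + σQ) ^ 2) = ((σP + σQ)/r)^2 := by
      rw [div_pow, hr2]
      have hd : (0:ℝ) < (mP - mQ) ^ 2 + (σP + σQ) ^ 2 := by positivity
      field_simp
      ring
    rw [h1, Real.sqrt_sq (div_nonneg hs0 hrpos.le)]
  -- attainment
  obtain ⟨p, q, u₁, u₂, hp0, hp1, hq0, hq1, hu, _, _, hmP, hmQ, hvP, hvQ, hrho⟩ :=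
    constr mP mQ σP σQ hne hσP hσQ
  obtain ⟨P₀, Q₀, hP₀, hQ₀, hintP, hintQ, hmomP, hmomQ, hsP, hsQ, hhel⟩ :=
    attain_all p q u₁ u₂ hp0 hp1 hq0 hq1 hu
  have hidm : StronglyMeasurable (fun x : ℝ => x) := measurable_id.stronglyMeasurable
  have hsqm : StronglyMeasurable (fun x : ℝ => x^2) :=
    (measurable_id.pow_const 2).stronglyMeasurable
  have hmPm : StronglyMeasurable (fun x : ℝ => (x - mP)^2) :=
    ((measurable_id.sub_const mP).pow_const 2).stronglyMeasurable
  have hmQm : StronglyMeasurable (fun x : ℝ => (x - mQ)^2) :=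
    ((measurable_id.sub_const mQ).pow_const 2).stronglyMeasurable
  have hPmean : ∫ x, x ∂P₀ = mP := by rw [hmomP _ hidm]; exact hmP
  have hQmean : ∫ x, x ∂Q₀ = mQ := by rw [hmomQ _ hidm]; exact hmQ
  have hPvar : ∫ x, (x - mP)^2 ∂P₀ = σP^2 := by
    rw [hmomP _ hmPm]
    linear_combination hvP + (p*u₁ + (1-p)*u₂ + mP - 2*mP) * hmP
  have hQvar : ∫ x, (x - mQ)^2 ∂Q₀ = σQ^2 := by
    rw [hmomQ _ hmQm]
    linear_combination hvQ + (q*u₁ + (1-q)*u₂ + mQ - 2*mQ) * hmQ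
  have hcon : MomentConstraints mP mQ σP σQ P₀ Q₀ :=
    ⟨hP₀, hQ₀, hintP _ hidm, hintP _ hsqm, hintQ _ hidm, hintQ _ hsqm,
      hPmean, hPvar, hQmean, hQvar⟩
  have hval₀ : hellingerSq P₀ Q₀
      = 1 - Real.sqrt (1 - (mP - mQ) ^ 2 / ((mP - mQ) ^ 2 + (σP + σQ) ^ 2)) := by
    rw [hhel, hrho, hval]
  -- lower bound
  have hlb : ∀ h ∈ { h : ℝ | ∃ P Q : Measure ℝ, MomentConstraints mP mQ σP σQ P Q ∧
      h = hellingerSq P Q },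
      1 - Real.sqrt (1 - (mP - mQ) ^ 2 / ((mP - mQ) ^ 2 + (σP + σQ) ^ 2)) ≤ h := by
    rintro h ⟨P, Q, ⟨hPp, hQp, hxP, hx2P, hxQ, hx2Q, hmPc, hvPc, hmQc, hvQc⟩, rfl⟩
    haveI := hPp; haveI := hQp
    rw [hellinger_eq_one_sub_BC P Q, hval]
    have hBC : ∫ x, Real.sqrt ((P.rnDeriv (P+Q) x).toReal * (Q.rnDeriv (P+Q) x).toReal) ∂(P+Q)
        ≤ (σP + σQ) / r := by
      refine le_of_forall_pos_le_add ?_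
      intro ε hε
      set ε' : ℝ := ε * r / 2 with hε''
      have hε'pos : 0 < ε' := by positivity
      obtain ⟨p', q', u₁', u₂', hp0', hp1', hq0', hq1', hu', hps', hqs',
          hmP', hmQ', hvP', hvQ', hrho'⟩ :=
        constr mP mQ (σP + ε') (σQ + ε') hne (by linarith) (by linarith)
      have hp1s : p' < 1 := hps' (by linarith)
      have hq0s : 0 < q' := hqs' (by linarith)
      have hBC' := BC_le_rho (P := P) (Q := Q) p' q' u₁' u₂' hp0' hp1s hq0s hq1' hu'
        hxP hx2P hxQ hx2Q
        (by rw [hmPc, ← hmP'])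
        (by rw [hmP', hvPc, hvP']; exact pow_le_pow_left₀ hσP (by linarith) 2)
        (by rw [hmQc, ← hmQ'])
        (by rw [hmQ', hvQc, hvQ']; exact pow_le_pow_left₀ hσQ (by linarith) 2)
      rw [hrho'] at hBC'
      have hrle : r ≤ Real.sqrt ((mP - mQ)^2 + (σP + ε' + (σQ + ε'))^2) := by
        apply Real.sqrt_le_sqrt
        have h9 := pow_le_pow_left₀ hs0 (show σP+σQ ≤ σP + ε' + (σQ + ε') by linarith) 2
        linarith only [h9]
      have hrgpos : 0 < Real.sqrt ((mP - mQ)^2 + (σP + ε' + (σQ + ε'))^2) :=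
        lt_of_lt_of_le hrpos hrle
      have h2 : (σP + ε' + (σQ + ε'))/Real.sqrt ((mP - mQ)^2 + (σP + ε' + (σQ + ε'))^2)
          ≤ (σP + ε' + (σQ + ε'))/r := by
        rw [div_le_div_iff₀ hrgpos hrpos]
        apply mul_le_mul_of_nonneg_left hrle (by linarith)
      have h3 : (σP + ε' + (σQ + ε'))/r = (σP + σQ)/r + ε := by
        rw [hε'']
        field_simp
        ring
      linarith
    linarith
  constructor
  · refine IsLeast.csInf_eq ⟨⟨P₀, Q₀, hcon, hval₀.symm⟩, ?_⟩
    exact hlb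
  · exact ⟨P₀, Q₀, hcon, ⟨u₁, u₂, hsP, hsQ⟩, hval₀⟩
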